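/- No one-way deterministic one-counter automaton (1D1CA) over the alphabet {a,b,c,d,e} recognizes the language L = (complement of EQ* within {a,b}*) ∪ EQ³, i.e., there is no 1D1CA whose set of accepted strings among {a,b,c,d,e}* equals L. -/

import Mathlib

/-- Input symbols extended with the left (`cent`) and right (`dollar`) end-markers. -/
inductive TSym (α : Type) : Type
  | cent : TSym α
  | letter : α → TSym α
  | dollar : TSym α

/-- The tape content `¢ w $` for an input word `w`. -/
def tagged {α : Type} (w : List α) : List (TSym α) :=
  TSym.cent :: (w.map TSym.letter ++ [TSym.dollar])

/-- A one-way deterministic one-counter automaton. -/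
structure OneD1CA (α : Type) where
  Q : Type
  [fintypeQ : Fintype Q]
  [decQ : DecidableEq Q]
  q0 : Q
  acc : Set Q
  m : ℕ
  δ : Q → TSym α → Bool → Q × ℤ
  bound : ∀ q σ z, |(δ q σ z).2| ≤ (m : ℤ)

attribute [instance] OneD1CA.fintypeQ OneD1CA.decQ

namespace OneD1CA

variable {α : Type} (M : OneD1CA α)

/-- One computation step on a configuration (state, counter value). -/
def step (p : M.Q × ℤ) (σ : TSym α) : M.Q × ℤ :=
  ((M.δ p.1 σ (decide (p.2 = 0))).1, p.2 + (M.δ p.1 σ (decide (p.2 = 0))).2)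

/-- Configuration reached from the initial configuration after reading a list of tape symbols. -/
def confAfter (l : List (TSym α)) : M.Q × ℤ :=
  l.foldl M.step (M.q0, 0)

/-- The automaton accepts `w` iff the state after reading `¢ w $` is accepting. -/
def accepts (w : List α) : Prop :=
  (M.confAfter (tagged w)).1 ∈ M.acc

/-- The automaton recognizes the language `L` if it accepts exactly the members of `L`. -/
def recognizes (L : Set (List α)) : Prop :=
  ∀ w : List α, M.accepts w ↔ w ∈ L

end OneD1CA

/-- The alphabet `{a, b, c, d, e}`. -/
inductive Γ5 : Type
  | a : Γ5
  | b : Γ5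
  | c : Γ5
  | d : Γ5
  | e : Γ5
deriving DecidableEq

/-- The language `EQ = { a^n b^n : n > 0 }` over `{a,b,c,d,e}`. -/
def EQab : Language Γ5 :=
  {w | ∃ n : ℕ, 0 < n ∧ w = List.replicate n Γ5.a ++ List.replicate n Γ5.b}

/-- The Kleene closure `EQ*`. -/
def EQabStar : Language Γ5 := KStar.kstar EQab

/-- The complement of `EQ*` within `{a,b}*`. -/
def coEQstar : Set (List Γ5) :=
  {w | (∀ x ∈ w, x = Γ5.a ∨ x = Γ5.b) ∧ w ∉ EQabStar}

/-- The language `EQ³ = { c^n d^n e^n : n ≥ 0 }`. -/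
def EQ3 : Set (List Γ5) :=
  {w | ∃ n : ℕ, w = List.replicate n Γ5.c ++ List.replicate n Γ5.d ++ List.replicate n Γ5.e}

/-- The language `L = (complement of EQ* within {a,b}*) ∪ EQ³`. -/
def LangL : Set (List Γ5) := coEQstar ∪ EQ3

namespace Stmt16Aux

open List Function

variable {α : Type} (M : OneD1CA α)

/-- nonzero-mode state transition -/
def fm (x : TSym α) (q : M.Q) : M.Q := (M.δ q x false).1

/-- nonzero-mode counter increment -/
def icm (x : TSym α) (q : M.Q) : ℤ := (M.δ q x false).2

/-- cumulative counter change along the nonzero-mode run -/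
def Cs (x : TSym α) : ℕ → M.Q → ℤ
  | 0, _ => 0
  | (t+1), q => Cs x t q + icm M x ((fm M x)^[t] q)

lemma step_ne {q : M.Q} {v : ℤ} (hv : v ≠ 0) (σ : TSym α) :
    M.step (q, v) σ = ((M.δ q σ false).1, v + (M.δ q σ false).2) := by
  simp [OneD1CA.step, hv]

lemma mode (x : TSym α) (q : M.Q) (v : ℤ) (T : ℕ)
    (h : ∀ t < T, v + Cs M x t q ≠ 0) :
    List.foldl M.step (q, v) (List.replicate T x) =
      ((fm M x)^[T] q, v + Cs M x T q) := by
  induction T with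
  | zero => simp [Cs]
  | succ T ih =>
      have hT : ∀ t < T, v + Cs M x t q ≠ 0 := fun t ht => h t (Nat.lt_succ_of_lt ht)
      rw [List.replicate_succ', List.foldl_append, ih hT]
      have hne : v + Cs M x T q ≠ 0 := h T (Nat.lt_succ_self T)
      simp only [List.foldl_cons, List.foldl_nil]
      rw [step_ne M hne]
      simp [Cs, fm, icm, Function.iterate_succ_apply']
      ring

lemma cs_add (x : TSym α) (a b : ℕ) (q : M.Q) :
    Cs M x (a + b) q = Cs M x a q + Cs M x b ((fm M x)^[a] q) := by
  induction b with
  | zero => simp [Cs]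
  | succ b ih =>
      have : a + (b+1) = (a+b) + 1 := rfl
      rw [this]
      show Cs M x (a+b) q + icm M x ((fm M x)^[a+b] q) = _
      rw [ih]
      have : (fm M x)^[a+b] q = (fm M x)^[b] ((fm M x)^[a] q) := by
        rw [Nat.add_comm, Function.iterate_add_apply]
      rw [this]
      show _ = Cs M x a q + (Cs M x b ((fm M x)^[a] q) + icm M x ((fm M x)^[b] ((fm M x)^[a] q)))
      ring

lemma icm_bound (x : TSym α) (q : M.Q) : |icm M x q| ≤ (M.m : ℤ) := M.bound q x false

lemma cs_bound (x : TSym α) (t : ℕ) (q : M.Q) : |Cs M x t q| ≤ (M.m : ℤ) * t := by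
  induction t generalizing q with
  | zero => simp [Cs]
  | succ t ih =>
      have h1 : |Cs M x t q + icm M x ((fm M x)^[t] q)| ≤ |Cs M x t q| + |icm M x ((fm M x)^[t] q)| :=
        abs_add_le _ _
      have := ih q
      have hb := icm_bound M x ((fm M x)^[t] q)
      show |Cs M x t q + icm M x ((fm M x)^[t] q)| ≤ (M.m : ℤ) * (t+1)
      push_cast
      nlinarith

section cycle

variable (x : TSym α) (q : M.Q) (a p : ℕ)

lemma iter_per (hcyc : (fm M x)^[a+p] q = (fm M x)^[a] q) :
    ∀ t, a ≤ t → (fm M x)^[t+p] q = (fm M x)^[t] q := by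
  intro t ht
  obtain ⟨u, rfl⟩ := Nat.exists_eq_add_of_le ht
  have h1 : a + u + p = u + (a + p) := by ring
  rw [h1, Function.iterate_add_apply, hcyc, ← Function.iterate_add_apply, Nat.add_comm]

lemma iter_per_mult (hcyc : (fm M x)^[a+p] q = (fm M x)^[a] q) :
    ∀ t, a ≤ t → ∀ k, (fm M x)^[t + k*p] q = (fm M x)^[t] q := by
  intro t ht k
  induction k with
  | zero => simp
  | succ k ih =>
      have : t + (k+1)*p = (t + k*p) + p := by ring
      rw [this, iter_per M x q a p hcyc _ (le_trans ht (Nat.le_add_right _ _)), ih]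

variable (Λ : ℕ)

lemma csL_const (hcyc : (fm M x)^[a+p] q = (fm M x)^[a] q) (hd : p ∣ Λ) :
    ∀ t, a ≤ t → Cs M x Λ ((fm M x)^[t] q) = Cs M x Λ ((fm M x)^[a] q) := by
  have key : ∀ t, a ≤ t → Cs M x Λ ((fm M x)^[t+1] q) = Cs M x Λ ((fm M x)^[t] q) := by
    intro t ht
    obtain ⟨k, hk⟩ := hd
    have hfix : (fm M x)^[Λ] ((fm M x)^[t] q) = (fm M x)^[t] q := by
      rw [← Function.iterate_add_apply, Nat.add_comm]
      rw [hk, Nat.mul_comm]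
      exact iter_per_mult M x q a p hcyc t ht k
    have h1 : Cs M x (Λ + 1) ((fm M x)^[t] q)
        = Cs M x Λ ((fm M x)^[t] q) + icm M x ((fm M x)^[t] q) := by
      show Cs M x Λ _ + icm M x ((fm M x)^[Λ] ((fm M x)^[t] q)) = _
      rw [hfix]
    have h2 : Cs M x (Λ + 1) ((fm M x)^[t] q)
        = icm M x ((fm M x)^[t] q) + Cs M x Λ ((fm M x)^[t+1] q) := by
      have := cs_add M x 1 Λ ((fm M x)^[t] q)
      rw [Nat.add_comm 1 Λ] at this
      rw [this]
      have hc1 : Cs M x 1 ((fm M x)^[t] q) = icm M x ((fm M x)^[t] q) := by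
        show (0 : ℤ) + icm M x ((fm M x)^[0] ((fm M x)^[t] q)) = _
        simp
      rw [hc1]
      rw [← Function.iterate_add_apply, Nat.add_comm 1 t]
    omega
  intro t ht
  induction t with
  | zero =>
      have : a = 0 := Nat.le_zero.mp ht
      rw [this]
  | succ t ih =>
      rcases Nat.lt_or_ge a (t+1) with h | h
      · have ht' : a ≤ t := Nat.lt_succ_iff.mp h
        rw [key t ht', ih ht']
      · have : a = t + 1 := le_antisymm ht h
        rw [this]

lemma drift (hcyc : (fm M x)^[a+p] q = (fm M x)^[a] q) (hd : p ∣ Λ) :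
    ∀ t, a ≤ t → Cs M x (t + Λ) q = Cs M x t q + Cs M x Λ ((fm M x)^[a] q) := by
  intro t ht
  rw [cs_add, csL_const M x q a p Λ hcyc hd t ht]

lemma drift_mult (hcyc : (fm M x)^[a+p] q = (fm M x)^[a] q) (hd : p ∣ Λ) :
    ∀ t, a ≤ t → ∀ k : ℕ, Cs M x (t + k * Λ) q = Cs M x t q + k * Cs M x Λ ((fm M x)^[a] q) := by
  intro t ht k
  induction k with
  | zero => simp
  | succ k ih =>
      have h1 : t + (k+1)*Λ = (t + k*Λ) + Λ := by ring
      rw [h1, drift M x q a p Λ hcyc hd _ (le_trans ht (Nat.le_add_right _ _)), ih]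
      push_cast
      ring

end cycle

lemma orbit_cycle (x : TSym α) (q : M.Q) :
    ∃ a p : ℕ, 1 ≤ p ∧ a + p ≤ Fintype.card M.Q ∧ (fm M x)^[a+p] q = (fm M x)^[a] q := by
  have hcard : Fintype.card M.Q < Fintype.card (Fin (Fintype.card M.Q + 1)) := by simp
  obtain ⟨i, j, hne, heq⟩ :=
    Fintype.exists_ne_map_eq_of_card_lt (fun i : Fin (Fintype.card M.Q + 1) => (fm M x)^[i] q) hcard
  rcases Nat.lt_or_ge i j with h | h
  · exact ⟨i, j - i, by omega, by omega, by
      have : (i : ℕ) + ((j : ℕ) - i) = j := by omega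
      rw [this, heq]⟩
  · have h' : (j : ℕ) < i := by
      rcases Nat.lt_or_ge j i with h2 | h2
      · exact h2
      · exact absurd (Fin.ext (le_antisymm h2 h)) hne
    exact ⟨j, i - j, by omega, by omega, by
      have : (j : ℕ) + ((i : ℕ) - j) = i := by omega
      rw [this, ← heq]⟩

lemma inf_fiber {S : Set ℕ} (hS : S.Infinite) {β : Type} [Finite β] (g : ℕ → β) :
    ∃ b, {n | n ∈ S ∧ g n = b}.Infinite := by
  by_contra hcon
  push_neg at hcon
  have : S ⊆ ⋃ b ∈ (Set.univ : Set β), {n | n ∈ S ∧ g n = b} := by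
    intro n hn
    simp only [Set.mem_iUnion]
    exact ⟨g n, trivial, hn, rfl⟩
  have hfin : (⋃ b ∈ (Set.univ : Set β), {n | n ∈ S ∧ g n = b}).Finite :=
    Set.Finite.biUnion Set.finite_univ (fun b _ => hcon b)
  exact hS (hfin.subset this)

lemma inf_large {S : Set ℕ} (hS : S.Infinite) (N : ℕ) : {n | n ∈ S ∧ N ≤ n}.Infinite := by
  have : {n | n ∈ S ∧ N ≤ n} = S \ (Set.Iio N) := by
    ext n; simp only [Set.mem_setOf_eq, Set.mem_diff, Set.mem_Iio, not_lt]
  rw [this]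
  exact hS.diff (Set.finite_Iio N)

end Stmt16Aux

namespace Stmt16Aux

open List

abbrev cL : TSym Γ5 := TSym.letter Γ5.c
abbrev dL : TSym Γ5 := TSym.letter Γ5.d
abbrev eL : TSym Γ5 := TSym.letter Γ5.e

variable (M : OneD1CA Γ5)

/-- configuration after `¢ c^n` -/
def Pc (n : ℕ) : M.Q × ℤ :=
  List.foldl M.step (M.step (M.q0, 0) TSym.cent) (List.replicate n cL)

/-- configuration after `¢ c^n d^t` -/
def Ed (n t : ℕ) : M.Q × ℤ := List.foldl M.step (Pc M n) (List.replicate t dL)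

/-- acceptance of the remaining input `e^k $` from configuration κ -/
def acceptsFrom (κ : M.Q × ℤ) (k : ℕ) : Prop :=
  (M.step (List.foldl M.step κ (List.replicate k eL)) TSym.dollar).1 ∈ M.acc

lemma accepts_decomp (i j k : ℕ) :
    M.accepts (List.replicate i Γ5.c ++ List.replicate j Γ5.d ++ List.replicate k Γ5.e) ↔
      acceptsFrom M (Ed M i j) k := by
  have htag : tagged (List.replicate i Γ5.c ++ List.replicate j Γ5.d ++ List.replicate k Γ5.e)
      = TSym.cent :: (List.replicate i cL ++ List.replicate j dL ++ List.replicate k eL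
          ++ [TSym.dollar]) := by
    simp [tagged, List.map_append, List.map_replicate]
  rw [OneD1CA.accepts, OneD1CA.confAfter, htag]
  rw [List.foldl_cons, List.foldl_append, List.foldl_append, List.foldl_append]
  rfl

lemma repw_mem_LangL (i j k : ℕ) :
    (List.replicate i Γ5.c ++ List.replicate j Γ5.d ++ List.replicate k Γ5.e) ∈ LangL ↔
      (j = i ∧ k = i) := by
  constructor
  · rintro (⟨hab, hns⟩ | ⟨N, hN⟩)
    · exfalso
      rcases Nat.eq_zero_or_pos i with hi | hi
      · rcases Nat.eq_zero_or_pos j with hj | hj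
        · rcases Nat.eq_zero_or_pos k with hk | hk
          · subst hi; subst hj; subst hk
            simp only [List.replicate_zero, List.append_nil, List.nil_append] at hns
            exact hns (Language.nil_mem_kstar EQab)
          · have hmem : Γ5.e ∈ (List.replicate i Γ5.c ++ List.replicate j Γ5.d
                ++ List.replicate k Γ5.e) := by
              refine List.mem_append.mpr (Or.inr ?_)
              exact List.mem_replicate.mpr ⟨Nat.pos_iff_ne_zero.mp hk, rfl⟩
            rcases hab _ hmem with h | h <;> exact Γ5.noConfusion h
        · have hmem : Γ5.d ∈ (List.replicate i Γ5.c ++ List.replicate j Γ5.d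
              ++ List.replicate k Γ5.e) := by
            refine List.mem_append.mpr (Or.inl (List.mem_append.mpr (Or.inr ?_)))
            exact List.mem_replicate.mpr ⟨Nat.pos_iff_ne_zero.mp hj, rfl⟩
          rcases hab _ hmem with h | h <;> exact Γ5.noConfusion h
      · have hmem : Γ5.c ∈ (List.replicate i Γ5.c ++ List.replicate j Γ5.d
            ++ List.replicate k Γ5.e) := by
          refine List.mem_append.mpr (Or.inl (List.mem_append.mpr (Or.inl ?_)))
          exact List.mem_replicate.mpr ⟨Nat.pos_iff_ne_zero.mp hi, rfl⟩
        rcases hab _ hmem with h | h <;> exact Γ5.noConfusion h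
    · have hc := congrArg (List.count Γ5.c) hN
      have hd := congrArg (List.count Γ5.d) hN
      have he := congrArg (List.count Γ5.e) hN
      simp [List.count_append, List.count_replicate] at hc hd he
      omega
  · rintro ⟨h1, h2⟩
    exact Or.inr ⟨i, by rw [h1, h2]⟩

end Stmt16Aux

namespace Stmt16Aux

open List

variable (M : OneD1CA Γ5)

lemma ed_add (n t u : ℕ) :
    Ed M n (t + u) = List.foldl M.step (Ed M n t) (List.replicate u dL) := by
  rw [Ed, Ed, List.replicate_add, List.foldl_append]

lemma acceptsFrom_split (κ κ' : M.Q × ℤ) (β x : ℕ)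
    (h : List.foldl M.step κ (List.replicate β eL) = κ') :
    acceptsFrom M κ (β + x) ↔ acceptsFrom M κ' x := by
  rw [acceptsFrom, List.replicate_add, List.foldl_append, h, acceptsFrom]

lemma raw2form (x : TSym Γ5) (κ : M.Q × ℤ) (T : ℕ)
    (h : ∀ t < T, (List.foldl M.step κ (List.replicate t x)).2 ≠ 0) :
    List.foldl M.step κ (List.replicate T x) = ((fm M x)^[T] κ.1, κ.2 + Cs M x T κ.1) := by
  induction T with
  | zero => simp [Cs]
  | succ T ih =>
      have hT : ∀ t < T, (List.foldl M.step κ (List.replicate t x)).2 ≠ 0 :=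
        fun t ht => h t (Nat.lt_succ_of_lt ht)
      have hform := ih hT
      have hne : (List.foldl M.step κ (List.replicate T x)).2 ≠ 0 := h T (Nat.lt_succ_self T)
      rw [hform] at hne
      simp only at hne
      rw [List.replicate_succ', List.foldl_append, hform]
      simp only [List.foldl_cons, List.foldl_nil]
      rw [step_ne M hne]
      simp [Cs, fm, icm, Function.iterate_succ_apply']
      ring

section withHAF

variable (hAF : ∀ i j k : ℕ, acceptsFrom M (Ed M i j) k ↔ (j = i ∧ k = i))

include hAF

/-- the run from the diagonal configuration must touch zero within `n` e-steps -/
lemma ze (n : ℕ) (hn : Fintype.card M.Q + Fintype.card M.Q + 1 ≤ n) :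
    ∃ t, t ≤ n ∧ ((Ed M n n).2 + Cs M eL t (Ed M n n).1 = 0) := by
  by_contra hcon
  push_neg at hcon
  set q := (Ed M n n).1 with hq
  set w := (Ed M n n).2 with hw
  have hk : ∀ k, k ≤ n →
      (acceptsFrom M (Ed M n n) k ↔ (M.δ ((fm M eL)^[k] q) TSym.dollar false).1 ∈ M.acc) := by
    intro k hkn
    have hmode : List.foldl M.step (q, w) (List.replicate k eL) = ((fm M eL)^[k] q, w + Cs M eL k q) :=
      mode M eL q w k (fun t ht => hcon t (le_trans (Nat.le_of_lt ht) hkn))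
    have hne : w + Cs M eL k q ≠ 0 := hcon k hkn
    have hmode' : List.foldl M.step (Ed M n n) (List.replicate k eL)
        = ((fm M eL)^[k] q, w + Cs M eL k q) := by
      rw [← hmode]
    simp only [acceptsFrom]
    rw [hmode', step_ne M hne]
  obtain ⟨a, p, hp1, hps, hcyc⟩ := orbit_cycle M eL q
  set k' := a + (n - a) % p with hk'
  have hiter : (fm M eL)^[n] q = (fm M eL)^[k'] q := by
    have hdecomp : n = k' + ((n - a) / p) * p := by
      have h1 : (n - a) % p + p * ((n - a) / p) = n - a := Nat.mod_add_div _ _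
      have h2 : a ≤ n := by omega
      have h3 : (n - a) / p * p = p * ((n - a) / p) := Nat.mul_comm _ _
      omega
    rw [hdecomp]
    exact iter_per_mult M eL q a p hcyc k' (Nat.le_add_right _ _) _
  have hklt : k' < n := by
    have : (n - a) % p < p := Nat.mod_lt _ (by omega)
    omega
  have h1 : acceptsFrom M (Ed M n n) n := (hAF n n n).mpr ⟨rfl, rfl⟩
  have h2 : ¬ acceptsFrom M (Ed M n n) k' := by
    intro hacc
    exact absurd ((hAF n n k').mp hacc).2 (Nat.ne_of_lt hklt)
  rw [hk n (le_refl n), hiter] at h1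
  rw [hk k' (le_of_lt hklt)] at h2
  exact h2 h1

/-- only finitely many `n` admit a zero of the counter during the `d`-block -/
lemma dz_finite : {n : ℕ | ∃ t, t ≤ n ∧ (Ed M n t).2 = 0}.Finite := by
  set S := {n : ℕ | ∃ t, t ≤ n ∧ (Ed M n t).2 = 0} with hS
  have hinj : Function.Injective (fun x : S => (Ed M x.1 (Nat.find x.2)).1) := by
    rintro ⟨n, hn⟩ ⟨n', hn'⟩ heq
    simp only at heq
    have hfind := Nat.find_spec hn
    have hfind' := Nat.find_spec hn'
    set t := Nat.find hn
    set t' := Nat.find hn'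
    have hconf : Ed M n t = Ed M n' t' := by
      have h2 : (Ed M n t).2 = (Ed M n' t').2 := by rw [hfind.2, hfind'.2]
      exact Prod.ext heq h2
    have hkey : Ed M n n = Ed M n' (t' + (n - t)) := by
      have h1 : n = t + (n - t) := by omega
      rw [show Ed M n n = Ed M n (t + (n - t)) from by rw [← h1]]
      rw [ed_add, ed_add, hconf]
    have haccn : acceptsFrom M (Ed M n n) n := (hAF n n n).mpr ⟨rfl, rfl⟩
    rw [hkey] at haccn
    have := ((hAF n' (t' + (n - t)) n).mp haccn).2
    exact Subtype.ext this
  have : Finite S := Finite.of_injective _ hinj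
  exact S.toFinite

end withHAF

end Stmt16Aux

open Stmt16Aux in
set_option maxHeartbeats 1000000 in
/-- no 1D1CA recognizes `L = (complement of EQ* within {a,b}*) ∪ EQ³`. -/
theorem stmt16 : ¬ ∃ M : OneD1CA Γ5, M.recognizes LangL := by
  rintro ⟨M, hM⟩
  classical
  -- acceptance characterization on the words c^i d^j e^k
  have hAF : ∀ i j k : ℕ, acceptsFrom M (Ed M i j) k ↔ (j = i ∧ k = i) := by
    intro i j k
    rw [← accepts_decomp, hM, repw_mem_LangL]
  set s := Fintype.card M.Q with hs
  -- the base infinite set : large n with no zero during the d-block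
  have hIci : ({n : ℕ | 2*s+1 ≤ n}).Infinite := by
    have : {n : ℕ | 2*s+1 ≤ n} = Set.Ici (2*s+1) := rfl
    rw [this]; exact Set.Ici_infinite _
  have hS1 : ({n : ℕ | 2*s+1 ≤ n} \ {n : ℕ | ∃ t, t ≤ n ∧ (Ed M n t).2 = 0}).Infinite :=
    hIci.diff (dz_finite M hAF)
  set S1 := {n : ℕ | 2*s+1 ≤ n} \ {n : ℕ | ∃ t, t ≤ n ∧ (Ed M n t).2 = 0} with hS1def
  -- the first zero time of the e-run from the diagonal configuration
  set βf : ℕ → ℕ := fun n =>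
    if hex : ∃ t, t ≤ n ∧ ((Ed M n n).2 + Cs M eL t (Ed M n n).1 = 0) then Nat.find hex else 0
    with hβf
  have hβspec : ∀ n, 2*s+1 ≤ n →
      (βf n ≤ n ∧ (Ed M n n).2 + Cs M eL (βf n) (Ed M n n).1 = 0 ∧
        ∀ t < βf n, (Ed M n n).2 + Cs M eL t (Ed M n n).1 ≠ 0) := by
    intro n hn
    have hex := ze M hAF n (by omega)
    have h1 : βf n = Nat.find hex := by rw [hβf]; simp [dif_pos hex]
    have h2 := Nat.find_spec hex
    refine ⟨by rw [h1]; exact h2.1, by rw [h1]; exact h2.2, ?_⟩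
    intro t ht hzero
    rw [h1] at ht
    exact (Nat.find_min hex ht) ⟨by omega, hzero⟩
  -- pigeonhole the three relevant states
  obtain ⟨⟨p, q, h⟩, hS2⟩ := inf_fiber hS1
    (fun n => ((Pc M n).1, (Ed M n n).1, (fm M eL)^[βf n] (Ed M n n).1))
  set S2 := {n | n ∈ S1 ∧ ((Pc M n).1, (Ed M n n).1, (fm M eL)^[βf n] (Ed M n n).1)
      = (p, q, h)} with hS2def
  have hS2facts : ∀ n ∈ S2, 2*s+1 ≤ n ∧ (¬∃ t, t ≤ n ∧ (Ed M n t).2 = 0) ∧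
      (Pc M n).1 = p ∧ (Ed M n n).1 = q ∧ (fm M eL)^[βf n] (Ed M n n).1 = h := by
    rintro n ⟨⟨hn1, hn2⟩, hn3⟩
    simp only [Prod.mk.injEq] at hn3
    exact ⟨hn1, hn2, hn3.1, hn3.2.1, hn3.2.2⟩
  -- the set B(h) is the singleton {x}
  have hBs : ∀ n ∈ S2, ∀ x' : ℕ, (acceptsFrom M ((h : M.Q), (0:ℤ)) x' ↔ βf n + x' = n) := by
    intro n hn x'
    obtain ⟨hn1, _, _, hq, hh⟩ := hS2facts n hn
    obtain ⟨hβ1, hβ2, hβ3⟩ := hβspec n hn1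
    have hsplit : List.foldl M.step (Ed M n n) (List.replicate (βf n) eL) = (h, 0) := by
      have hmode := mode M eL (Ed M n n).1 (Ed M n n).2 (βf n) (fun t ht => hβ3 t ht)
      rw [Prod.mk.eta] at hmode
      rw [hmode, hh, hβ2]
    have h1 := acceptsFrom_split M (Ed M n n) ((h : M.Q), (0:ℤ)) (βf n) x' hsplit
    rw [← h1, hAF]
    simp
  obtain ⟨n₀, hn₀⟩ := hS2.nonempty
  set x := n₀ - βf n₀ with hx
  have hBx : acceptsFrom M ((h : M.Q), (0:ℤ)) x := by
    apply (hBs n₀ hn₀ x).mpr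
    have := (hβspec n₀ (hS2facts n₀ hn₀).1).1
    omega
  have hβx : ∀ n ∈ S2, βf n + x = n := fun n hn => (hBs n hn x).mp hBx
  -- cycle structure of the d-run from p and the e-run from q
  obtain ⟨ad, pd, hpd1, hpds, hcycD⟩ := orbit_cycle M dL p
  obtain ⟨ae, pe, hpe1, hpes, hcycE⟩ := orbit_cycle M eL q
  set Λ := pd * pe with hΛ
  have hΛ1 : 1 ≤ Λ := Nat.one_le_iff_ne_zero.mpr (by positivity)
  have hdvdD : pd ∣ Λ := dvd_mul_right _ _
  have hdvdE : pe ∣ Λ := dvd_mul_left _ _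
  -- pigeonhole the residue class mod Λ
  obtain ⟨ρ, hS3⟩ := inf_fiber hS2 (fun n => (⟨n % Λ, Nat.mod_lt _ (by omega)⟩ : Fin Λ))
  set S3 := {n | n ∈ S2 ∧ (⟨n % Λ, Nat.mod_lt _ (by omega)⟩ : Fin Λ) = ρ} with hS3def
  have hS3sub : S3 ⊆ S2 := fun n hn => hn.1
  have hS3mod : ∀ n ∈ S3, ∀ n' ∈ S3, n ≤ n' → Λ ∣ n' - n := by
    rintro n ⟨_, hn⟩ n' ⟨_, hn'⟩ hle
    have : n % Λ = n' % Λ := by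
      have h1 : (⟨n % Λ, Nat.mod_lt _ (by omega)⟩ : Fin Λ) = ⟨n' % Λ, Nat.mod_lt _ (by omega)⟩ := by
        rw [hn, hn']
      exact congrArg Fin.val h1
    exact (Nat.modEq_iff_dvd' hle).mp this
  -- d-run of members of S3 is zero-free, giving the mode formula
  have hform : ∀ n ∈ S3, ∀ t ≤ n,
      Ed M n t = ((fm M dL)^[t] p, (Pc M n).2 + Cs M dL t p) := by
    intro n hn t ht
    obtain ⟨_, hnz, hp, _, _⟩ := hS2facts n (hS3sub hn)
    have hraw : ∀ t' < t, (List.foldl M.step (Pc M n) (List.replicate t' dL)).2 ≠ 0 := by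
      intro t' ht' hzero
      exact hnz ⟨t', by omega, hzero⟩
    have := raw2form M dL (Pc M n) t hraw
    rw [hp] at this
    exact this
  have hqiter : ∀ n ∈ S3, (fm M dL)^[n] p = q := by
    intro n hn
    have h1 := hform n hn n (le_refl n)
    have h2 := (hS2facts n (hS3sub hn)).2.2.2.1
    rw [h1] at h2
    exact h2
  have hwval : ∀ n ∈ S3, (Ed M n n).2 + Cs M eL (n - x) q = 0 := by
    intro n hn
    obtain ⟨hn1, _, _, hq, _⟩ := hS2facts n (hS3sub hn)
    have hβeq : βf n = n - x := by have := hβx n (hS3sub hn); omega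
    have := (hβspec n hn1).2.1
    rw [hq, hβeq] at this
    exact this
  have hwmin : ∀ n ∈ S3, ∀ t < n - x, (Ed M n n).2 + Cs M eL t q ≠ 0 := by
    intro n hn t ht
    obtain ⟨hn1, _, _, hq, _⟩ := hS2facts n (hS3sub hn)
    have hβeq : βf n = n - x := by have := hβx n (hS3sub hn); omega
    have := (hβspec n hn1).2.2 t (by omega)
    rw [hq] at this
    exact this
  -- drift of the e-cumulative sums
  set Δ := Cs M eL Λ ((fm M eL)^[ae] q) with hΔdef
  have hdriftE : ∀ t, ae ≤ t → ∀ k : ℕ, Cs M eL (t + k * Λ) q = Cs M eL t q + k * Δ :=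
    drift_mult M eL q ae pe Λ hcycE hdvdE
  -- relation between w-values along S3
  have hwrel : ∀ n ∈ S3, ∀ n' ∈ S3, x + ae ≤ n → n ≤ n' →
      (Ed M n' n').2 = (Ed M n n).2 - ((n' - n)/Λ : ℕ) * Δ := by
    intro n hn n' hn' hxan hle
    obtain ⟨r', hr'⟩ := hS3mod n hn n' hn' hle
    have hr'' : n' - x = (n - x) + r' * Λ := by
      have h1 : Λ * r' = r' * Λ := Nat.mul_comm _ _
      omega
    have hdiv : (n' - n) / Λ = r' := by rw [hr', Nat.mul_div_cancel_left _ (by omega)]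
    have h2 := hdriftE (n - x) (by omega) r'
    rw [← hr''] at h2
    have h3 := hwval n hn
    have h4 := hwval n' hn'
    rw [h2] at h4
    rw [hdiv]
    push_cast at h3 h4 ⊢
    linarith
  -- Δ ≠ 0
  have hΔne : Δ ≠ 0 := by
    intro hzero
    obtain ⟨n, hn, hnge⟩ := (inf_large hS3 (x + ae + 2*s + 1)).nonempty
    obtain ⟨n', hn', hgt⟩ := hS3.exists_gt n
    have hwr := hwrel n hn n' hn' (by omega) (by omega)
    rw [hzero] at hwr
    simp at hwr
    have hq := (hS2facts n (hS3sub hn)).2.2.2.1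
    have hq' := (hS2facts n' (hS3sub hn')).2.2.2.1
    have hconf : Ed M n n = Ed M n' n' := by
      apply Prod.ext
      · rw [hq, hq']
      · rw [hwr]
    have hacc : acceptsFrom M (Ed M n n) n := (hAF n n n).mpr ⟨rfl, rfl⟩
    rw [hconf] at hacc
    have := ((hAF n' n' n).mp hacc).2
    omega
  have hm1 : 1 ≤ M.m := by
    by_contra hc
    have hm0 : M.m = 0 := by omega
    have := cs_bound M eL Λ ((fm M eL)^[ae] q)
    rw [hm0] at this
    simp at this
    rw [← hΔdef] at this
    exact hΔne this
  -- the sign direction of the divergence of the w-values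
  set σ : ℤ := if 0 < Δ then -1 else 1 with hσdef
  have hσΔ : σ * Δ = -|Δ| := by
    by_cases hpos : 0 < Δ
    · rw [hσdef, if_pos hpos, abs_of_pos hpos]; ring
    · rw [hσdef, if_neg hpos, abs_of_nonpos (by omega)]; ring
  have hσabs : ∀ v : ℤ, σ * v ≤ |v| := by
    intro v
    by_cases hpos : 0 < Δ
    · rw [hσdef, if_pos hpos]; rw [neg_one_mul]; exact neg_le_abs v
    · rw [hσdef, if_neg hpos]; rw [one_mul]; exact le_abs_self v
  have hσne : ∀ v : ℤ, 1 ≤ σ * v → v ≠ 0 := by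
    intro v h1 hv
    rw [hv, mul_zero] at h1
    omega
  have hΔ1 : 1 ≤ |Δ| := by
    rcases abs_pos.mpr hΔne with h1
    omega
  have hσlow : ∀ v : ℤ, -|v| ≤ σ * v := by
    intro v
    by_cases hpos : 0 < Δ
    · rw [hσdef, if_pos hpos, neg_one_mul]; exact neg_le_neg (le_abs_self v)
    · rw [hσdef, if_neg hpos, one_mul]; exact neg_abs_le v
  -- margin constant
  set Wm : ℤ := 1 + M.m * (Λ + ae) + M.m * Λ with hWmdef
  have hWmpos : 1 ≤ Wm := by
    have : (0:ℤ) ≤ M.m * (Λ + ae) := by positivity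
    have : (0:ℤ) ≤ M.m * Λ := by positivity
    omega
  -- choose a base point and a far point n₁  with  σ * W₁ ≥ Wm
  obtain ⟨nb, hnb, hnbge⟩ := (inf_large hS3 (x + ae + ad + 2*s + 1)).nonempty
  set K : ℕ := (Wm + |(Ed M nb nb).2|).toNat with hKdef
  obtain ⟨n₁, hn₁, hn₁gt⟩ := hS3.exists_gt (nb + Λ * (K + 1))
  have hn₁ge : nb ≤ n₁ := by omega
  set W₁ : ℤ := (Ed M n₁ n₁).2 with hW₁def
  set β₁ : ℕ := n₁ - x with hβ₁def
  have hβ₁ae : ae ≤ β₁ := by omega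
  have hn₁ad : ad ≤ n₁ := by omega
  have hCsβ₁ : Cs M eL β₁ q = -W₁ := by
    have := hwval n₁ hn₁
    rw [hβ₁def]
    omega
  have hmin₁ : ∀ t < β₁, Cs M eL t q ≠ -W₁ := by
    intro t ht hEq
    exact hwmin n₁ hn₁ t (by omega) (by omega)
  have hW₁big : Wm ≤ σ * W₁ := by
    obtain ⟨r', hr'⟩ := hS3mod nb hnb n₁ hn₁ hn₁ge
    have hr'big : K + 1 ≤ r' := by
      have h1 : Λ * (K+1) ≤ n₁ - nb := by omega
      rw [hr'] at h1
      exact Nat.le_of_mul_le_mul_left h1 (by omega)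
    have hwr := hwrel nb hnb n₁ hn₁ (by omega) hn₁ge
    have hdiv : (n₁ - nb) / Λ = r' := by rw [hr', Nat.mul_div_cancel_left _ (by omega)]
    rw [hdiv] at hwr
    rw [hW₁def, hwr]
    have hKval : (K:ℤ) = Wm + |(Ed M nb nb).2| := by
      rw [hKdef]
      refine Int.toNat_of_nonneg ?_
      have := abs_nonneg ((Ed M nb nb).2)
      omega
    have h2 : σ * ((Ed M nb nb).2 - (r':ℤ) * Δ) = σ * (Ed M nb nb).2 + (r':ℤ) * |Δ| := by
      have : σ * ((Ed M nb nb).2 - (r':ℤ) * Δ) = σ * (Ed M nb nb).2 - (r':ℤ) * (σ * Δ) := by ring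
      rw [this, hσΔ]; ring
    rw [h2]
    have h3 := hσlow ((Ed M nb nb).2)
    have h4 : ((K:ℤ) + 1) ≤ (r':ℤ) := by
      have := (Nat.cast_le (α := ℤ)).mpr hr'big
      push_cast at this
      omega
    have h5 : (r':ℤ) * 1 ≤ (r':ℤ) * |Δ| := by
      apply mul_le_mul_of_nonneg_left hΔ1
      omega
    rw [mul_one] at h5
    omega
  -- the first-zero structure of the e-run from (q, W₁ - rΔ)
  have FZ : ∀ r : ℕ, Cs M eL (β₁ + r*Λ) q = -(W₁ - (r:ℤ)*Δ) ∧
      (∀ t < β₁ + r*Λ, Cs M eL t q ≠ -(W₁ - (r:ℤ)*Δ)) := by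
    intro r
    induction r with
    | zero => simpa using ⟨hCsβ₁, hmin₁⟩
    | succ r ih =>
        constructor
        · have h1 : β₁ + (r+1)*Λ = (β₁ + r*Λ) + 1 * Λ := by ring
          rw [h1, hdriftE (β₁ + r*Λ) (by omega) 1, ih.1]
          push_cast
          ring
        · intro t ht hEq
          have hb1 : |Cs M eL t q| ≤ (M.m:ℤ) * t := cs_bound M eL t q
          have hb2 : σ * (W₁ - ((r:ℤ)+1) * Δ) = σ * W₁ + ((r:ℤ)+1) * |Δ| := by
            have : σ * (W₁ - ((r:ℤ)+1) * Δ) = σ * W₁ - ((r:ℤ)+1) * (σ * Δ) := by ring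
            rw [this, hσΔ]; ring
          have hb3 : σ * (W₁ - ((r:ℤ)+1) * Δ) ≤ |W₁ - ((r:ℤ)+1) * Δ| := hσabs _
          have hb4 : |W₁ - ((r:ℤ)+1) * Δ| = |Cs M eL t q| := by
            rw [hEq]
            push_cast
            rw [abs_neg]
          have hrpos : (0:ℤ) ≤ (r:ℤ) + 1 := by positivity
          have habs : (0:ℤ) ≤ ((r:ℤ)+1) * |Δ| := by positivity
          have hmt : 1 + (M.m:ℤ) * (Λ + ae) ≤ (M.m:ℤ) * t := by
            have := hW₁big
            push_cast at hEq hb4 ⊢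
            nlinarith
          have htgt : Λ + ae < t := by
            by_contra hc
            push_neg at hc
            have hle : (M.m:ℤ) * t ≤ (M.m:ℤ) * ((Λ:ℤ) + (ae:ℤ)) := by
              apply mul_le_mul_of_nonneg_left _ (by positivity)
              exact_mod_cast hc
            omega
          have ht'' : ae ≤ t - Λ := by omega
          have hsplit : Cs M eL t q = Cs M eL (t - Λ) q + Δ := by
            have h1 : t = (t - Λ) + 1 * Λ := by omega
            calc Cs M eL t q = Cs M eL ((t - Λ) + 1 * Λ) q := by rw [← h1]
            _ = Cs M eL (t - Λ) q + 1 * Δ := hdriftE (t - Λ) ht'' 1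
            _ = Cs M eL (t - Λ) q + Δ := by ring
          have hEq' : Cs M eL (t - Λ) q = -(W₁ - (r:ℤ)*Δ) := by
            rw [hsplit] at hEq
            push_cast at hEq ⊢
            linarith
          have hge : β₁ + r*Λ ≤ t - Λ := by
            by_contra hc
            push_neg at hc
            exact ih.2 (t - Λ) hc hEq'
          have hrl : (r+1)*Λ = r*Λ + Λ := by ring
          omega
  -- the d-orbit through q is periodic with period Λ
  have hqcycd : (fm M dL)^[Λ] q = q := by
    have h1 : (fm M dL)^[nb] p = q := hqiter nb hnb
    have h2 : (fm M dL)^[nb + (Λ/pd) * pd] p = (fm M dL)^[nb] p :=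
      iter_per_mult M dL p ad pd hcycD nb (by omega) (Λ/pd)
    rw [Nat.div_mul_cancel hdvdD] at h2
    calc (fm M dL)^[Λ] q = (fm M dL)^[Λ] ((fm M dL)^[nb] p) := by rw [h1]
    _ = (fm M dL)^[Λ + nb] p := (Function.iterate_add_apply _ _ _ _).symm
    _ = (fm M dL)^[nb + Λ] p := by rw [Nat.add_comm]
    _ = q := by rw [h2, h1]
  have hcycQ : (fm M dL)^[0 + Λ] q = (fm M dL)^[0] q := by simpa using hqcycd
  set cq := Cs M dL Λ ((fm M dL)^[0] q) with hcqdef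
  have hdriftQ : ∀ t : ℕ, ∀ k : ℕ, Cs M dL (t + k * Λ) q = Cs M dL t q + k * cq :=
    fun t k => drift_mult M dL q 0 Λ Λ hcycQ dvd_rfl t (Nat.zero_le t) k
  have hiterQ : ∀ k : ℕ, (fm M dL)^[k * Λ] q = q := by
    intro k
    have := iter_per_mult M dL q 0 Λ hcycQ 0 (le_refl 0) k
    simpa using this
  -- the pumping amounts
  set g' : ℕ := Δ.natAbs with hg'def
  have hg'1 : 1 ≤ g' := by
    rw [hg'def]
    omega
  have hg'cast : ((g' : ℕ) : ℤ) = |Δ| := (Int.abs_eq_natAbs Δ).symm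
  set et : ℕ := (σ * cq).natAbs with hetdef
  -- choose the far point n'
  obtain ⟨n', hn', hn'gt⟩ := hS3.exists_gt (n₁ + Λ * (et + 1))
  obtain ⟨r'', hr''⟩ := hS3mod n₁ hn₁ n' hn' (by omega)
  have hr''ge : et + 1 ≤ r'' := by
    have h1 : Λ * (et+1) ≤ n' - n₁ := by omega
    rw [hr''] at h1
    exact Nat.le_of_mul_le_mul_left h1 (by omega)
  have hw' : (Ed M n' n').2 = W₁ - (r'':ℤ) * Δ := by
    have hwr := hwrel n₁ hn₁ n' hn' (by omega) (by omega)
    have hdiv : (n' - n₁) / Λ = r'' := by rw [hr'', Nat.mul_div_cancel_left _ (by omega)]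
    rw [hdiv] at hwr
    rw [hwr, hW₁def]
  have hσw' : σ * (Ed M n' n').2 = σ * W₁ + (r'':ℤ) * |Δ| := by
    rw [hw']
    have : σ * (W₁ - (r'':ℤ) * Δ) = σ * W₁ - (r'':ℤ) * (σ * Δ) := by ring
    rw [this, hσΔ]; ring
  -- select the pumping multiple j and the landing index r
  obtain ⟨j, r, hj1, hIDENT, hLB⟩ :
      ∃ j r : ℕ, 1 ≤ j ∧
        ((Ed M n' n').2 + ((j * g' : ℕ) : ℤ) * cq = W₁ - (r:ℤ) * Δ) ∧
        (∀ i : ℕ, i ≤ j * g' → Wm ≤ σ * ((Ed M n' n').2 + (i:ℤ) * cq)) := by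
    by_cases hsign : 0 ≤ σ * cq
    · -- ascending case : one block
      have hrZ : (0:ℤ) ≤ (r'':ℤ) + σ * cq := by positivity
      refine ⟨1, ((r'':ℤ) + σ * cq).toNat, le_refl 1, ?_, ?_⟩
      · rw [Int.toNat_of_nonneg hrZ, hw']
        have h9 : ((g':ℕ):ℤ) = -(σ * Δ) := by rw [hg'cast]; omega
        push_cast
        rw [h9]
        ring
      · intro i hi
        have h1 : (0:ℤ) ≤ (i:ℤ) * (σ * cq) := by positivity
        have h2 : σ * ((Ed M n' n').2 + (i:ℤ) * cq)
            = σ * (Ed M n' n').2 + (i:ℤ) * (σ * cq) := by ring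
        rw [h2, hσw']
        have h3 : (0:ℤ) ≤ (r'':ℤ) * |Δ| := by positivity
        linarith [hW₁big]
    · -- descending case
      push_neg at hsign
      have het1 : 1 ≤ et := by
        rw [hetdef]; omega
      have hetcast : (et : ℤ) = -(σ * cq) := by
        rw [hetdef]
        omega
      refine ⟨r'' / et, r'' % et, ?_, ?_, ?_⟩
      · have := Nat.div_le_div_right (c := et) (Nat.le_of_succ_le hr''ge)
        have h2 : et / et = 1 := Nat.div_self (by omega)
        have h3 : et ≤ r'' := by omega
        calc 1 = et / et := h2.symm
        _ ≤ r'' / et := Nat.div_le_div_right h3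
      · rw [hw']
        have h9 : ((r''/et :ℕ):ℤ) * ((et:ℕ):ℤ) * Δ = ((r''/et:ℕ):ℤ) * ((g':ℕ):ℤ) * cq := by
          rw [hetcast, hg'cast]
          have habs : |Δ| = -(σ * Δ) := by omega
          rw [habs]; ring
        have h10 : ((r'' % et : ℕ):ℤ) + ((et:ℕ):ℤ) * ((r''/et:ℕ):ℤ) = ((r'':ℕ):ℤ) := by
          exact_mod_cast Nat.mod_add_div r'' et
        rw [Nat.cast_mul]
        linear_combination Δ * h10 - h9
      · intro i hi
        have h2 : σ * ((Ed M n' n').2 + (i:ℤ) * cq)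
            = σ * (Ed M n' n').2 + (i:ℤ) * (σ * cq) := by ring
        rw [h2, hσw']
        have h4 : (i:ℤ) * (σ * cq) ≥ ((r''/et * g' : ℕ):ℤ) * (σ * cq) := by
          apply mul_le_mul_of_nonpos_right _ (le_of_lt hsign)
          exact_mod_cast hi
        have h5 : ((r''/et * g' : ℕ):ℤ) * (σ * cq) = -(((r''/et * et : ℕ):ℤ) * |Δ|) := by
          push_cast
          rw [hetcast, hg'cast]
          ring
        have h6 : ((r''/et * et : ℕ):ℤ) ≤ (r'':ℤ) := by
          exact_mod_cast Nat.div_mul_le_self r'' et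
        have h8 : ((r''/et * et : ℕ):ℤ) * |Δ| ≤ (r'':ℤ) * |Δ| := by
          apply mul_le_mul_of_nonneg_right h6 (abs_nonneg Δ)
        linarith [hW₁big, h4, h5, h8]
  -- the d-extension of length j*g'*Λ from the diagonal stays nonzero
  have hq'top := (hS2facts n' (hS3sub hn')).2.2.2.1
  have hEdnn : Ed M n' n' = (q, (Ed M n' n').2) := Prod.ext hq'top rfl
  have hWm2 : 1 + (M.m:ℤ) * ((Λ:ℤ) + (ae:ℤ)) ≤ Wm - (M.m:ℤ) * Λ := by
    rw [hWmdef]; push_cast; ring_nf; omega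
  have hLBfull : ∀ t, t ≤ j * g' * Λ →
      Wm - (M.m:ℤ) * Λ ≤ σ * ((Ed M n' n').2 + Cs M dL t q) := by
    intro t ht
    have hdecomp : (t % Λ) + (t / Λ) * Λ = t := by
      rw [Nat.mul_comm]; exact Nat.mod_add_div t Λ
    have hcs : Cs M dL t q = Cs M dL (t % Λ) q + ((t/Λ : ℕ):ℤ) * cq := by
      conv_lhs => rw [← hdecomp]
      exact hdriftQ (t % Λ) (t / Λ)
    have hdivle : t / Λ ≤ j * g' := by
      have h1 := Nat.div_le_div_right (c := Λ) ht
      rwa [Nat.mul_div_cancel _ (by omega)] at h1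
    have hmain := hLB (t / Λ) hdivle
    have hsmall : |Cs M dL (t % Λ) q| ≤ (M.m:ℤ) * Λ := by
      have h1 := cs_bound M dL (t % Λ) q
      have h2 : (M.m:ℤ) * ((t % Λ : ℕ):ℤ) ≤ (M.m:ℤ) * Λ := by
        apply mul_le_mul_of_nonneg_left _ (by positivity)
        exact_mod_cast Nat.le_of_lt (Nat.mod_lt t (show 0 < Λ by omega))
      omega
    have hre : σ * ((Ed M n' n').2 + Cs M dL t q)
        = σ * ((Ed M n' n').2 + ((t/Λ : ℕ):ℤ) * cq) + σ * Cs M dL (t % Λ) q := by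
      rw [hcs]; ring
    have hlow := hσlow (Cs M dL (t % Λ) q)
    linarith [hre, hmain, hlow, hsmall]
  have hextcond : ∀ t, t < j * g' * Λ → (Ed M n' n').2 + Cs M dL t q ≠ 0 := by
    intro t ht
    apply hσne
    have h1 := hLBfull t (le_of_lt ht)
    have hpos : (0:ℤ) ≤ (M.m:ℤ) * ((Λ:ℤ) + (ae:ℤ)) := by positivity
    linarith [h1, hWm2, hpos]
  have hext : List.foldl M.step (Ed M n' n') (List.replicate (j*g'*Λ) dL)
      = (q, W₁ - (r:ℤ) * Δ) := by
    rw [hEdnn]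
    rw [mode M dL q ((Ed M n' n').2) (j*g'*Λ) (fun t ht => hextcond t ht)]
    apply Prod.ext
    · show (fm M dL)^[j*g'*Λ] q = q
      exact hiterQ (j*g')
    · show (Ed M n' n').2 + Cs M dL (j*g'*Λ) q = W₁ - (r:ℤ) * Δ
      have h1 : Cs M dL (0 + (j*g')*Λ) q = Cs M dL 0 q + ((j*g' : ℕ):ℤ) * cq := hdriftQ 0 (j*g')
      simp only [Nat.zero_add] at h1
      rw [h1]
      show (Ed M n' n').2 + (Cs M dL 0 q + ((j*g' : ℕ):ℤ) * cq) = _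
      have h2 : Cs M dL 0 q = 0 := rfl
      rw [h2, zero_add]
      exact hIDENT
  have hfull : Ed M n' (n' + j*g'*Λ) = (q, W₁ - (r:ℤ)*Δ) := by
    rw [ed_add, hext]
  -- the e-run from the pumped configuration reaches (h, 0)
  have hfz := FZ r
  have hmodeE : List.foldl M.step (q, W₁ - (r:ℤ)*Δ) (List.replicate (β₁ + r*Λ) eL) = (h, 0) := by
    have hcond : ∀ t < β₁ + r*Λ, (W₁ - (r:ℤ)*Δ) + Cs M eL t q ≠ 0 := by
      intro t ht h0
      exact hfz.2 t ht (by linarith)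
    rw [mode M eL q (W₁ - (r:ℤ)*Δ) (β₁ + r*Λ) hcond]
    apply Prod.ext
    · show (fm M eL)^[β₁ + r*Λ] q = h
      have h1 : (fm M eL)^[β₁ + r*(Λ/pe)*pe] q = (fm M eL)^[β₁] q :=
        iter_per_mult M eL q ae pe hcycE β₁ hβ₁ae (r*(Λ/pe))
      have h2 : r*(Λ/pe)*pe = r*Λ := by rw [Nat.mul_assoc, Nat.div_mul_cancel hdvdE]
      rw [h2] at h1
      rw [h1]
      have hq₁ := (hS2facts n₁ (hS3sub hn₁)).2.2.2.1
      have hh₁ := (hS2facts n₁ (hS3sub hn₁)).2.2.2.2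
      have hβeq : βf n₁ = β₁ := by
        have := hβx n₁ (hS3sub hn₁)
        have := (hβspec n₁ (hS2facts n₁ (hS3sub hn₁)).1).1
        omega
      rw [hβeq, hq₁] at hh₁
      exact hh₁
    · show (W₁ - (r:ℤ)*Δ) + Cs M eL (β₁ + r*Λ) q = 0
      rw [hfz.1]
      ring
  -- the final contradiction
  have hacc : acceptsFrom M (Ed M n' (n' + j*g'*Λ)) ((β₁ + r*Λ) + x) := by
    rw [hfull]
    rw [acceptsFrom_split M _ ((h : M.Q), (0:ℤ)) (β₁ + r*Λ) x hmodeE]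
    exact hBx
  have hcontr := ((hAF n' (n' + j*g'*Λ) ((β₁ + r*Λ) + x)).mp hacc).1
  have hjpos : 1 ≤ j * g' * Λ := by
    have := Nat.mul_pos (Nat.mul_pos (show 0 < j by omega) (show 0 < g' by omega))
      (show 0 < Λ by omega)
    omega
  omega
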